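/- The TASEP current J_n = Z̃_{n-1}/Z̃_n (with Z̃_n the one-transit partition function at fugacities z₁=α, z₂=β) converges, as n → ∞, to: 1/4 if α, β ≥ 1/2; α(1-α) if α < 1/2 and β > α; β(1-β) if β < 1/2 and α > β. -/

import Mathlib

open Filter

/-- Ballot number B_{m,q}, with B_{0,0} = 1 and B_{m,q} = 0 for q > m. -/
noncomputable def Bq (m q : ℕ) : ℝ :=
  if m = 0 then (if q = 0 then 1 else 0)
  else if q ≤ m then
    (q : ℝ) * (2 * m - q - 1).factorial / ((m.factorial : ℝ) * (m - q).factorial)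
  else 0

/-- TASEP normalisation Z̃_n(α,β). -/
noncomputable def Zt2 (n : ℕ) (α β : ℝ) : ℝ :=
  ∑ p ∈ Finset.range (n + 1), Bq n p *
    ∑ q ∈ Finset.range (p + 1), α⁻¹ ^ q * β⁻¹ ^ (p - q)

lemma Bq_nonneg (m q : ℕ) : 0 ≤ Bq m q := by
  unfold Bq
  split_ifs <;> positivity

lemma Bq_zero_zero : Bq 0 0 = 1 := by simp [Bq]

lemma Bq_of_lt {m q : ℕ} (h : m < q) : Bq m q = 0 := by
  unfold Bq
  rcases Nat.eq_zero_or_pos m with rfl | hm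
  · simp; omega
  · rw [if_neg (by omega), if_neg (by omega)]

lemma Bq_zero_right {m : ℕ} (hm : m ≠ 0) : Bq m 0 = 0 := by
  unfold Bq
  rw [if_neg hm, if_pos (Nat.zero_le _)]
  simp

lemma Bq_self (m : ℕ) : Bq m m = 1 := by
  rcases Nat.eq_zero_or_pos m with rfl | hm
  · simp [Bq]
  · unfold Bq
    rw [if_neg (by omega), if_pos le_rfl]
    have h2 : 2 * m - m - 1 = m - 1 := by omega
    rw [h2, Nat.sub_self]
    have : (m : ℝ) * (m-1).factorial = m.factorial := by
      rw [← Nat.cast_mul]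
      congr 1
      obtain ⟨k, rfl⟩ := Nat.exists_eq_add_of_le hm
      simp only [Nat.succ_eq_add_one, Nat.add_sub_cancel_left, zero_add]
      rw [show 1 + k = k + 1 by omega, Nat.factorial_succ]
    rw [this]
    simp [Nat.factorial_ne_zero]

lemma Bq_one (n : ℕ) : Bq (n+1) 1 = catalan n := by
  unfold Bq
  rw [if_neg (by omega), if_pos (by omega)]
  have h1 : 2 * (n+1) - 1 - 1 = 2*n := by omega
  have h2 : n + 1 - 1 = n := by omega
  rw [h1, h2]
  rw [div_eq_iff (by positivity)]
  push_cast
  rw [one_mul]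
  rw [show ((catalan n):ℝ) * (((n+1).factorial:ℝ) * (n.factorial:ℝ))
      = ((catalan n * ((n+1).factorial * n.factorial) : ℕ):ℝ) by push_cast; ring]
  norm_cast
  rw [show catalan n * ((n+1).factorial * n.factorial) = ((n+1) * catalan n) * n.factorial * n.factorial by
    rw [Nat.factorial_succ]; ring]
  rw [succ_mul_catalan_eq_centralBinom, Nat.centralBinom]
  rw [show (2*n).choose n * n.factorial * n.factorial = (2*n).choose n * n.factorial * (2*n - n).factorial by
    congr 2; omega]
  exact ((Nat.choose_mul_factorial_mul_factorial (show n ≤ 2*n by omega)).symm)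

lemma Bq_formula {m q : ℕ} (hm : m ≠ 0) (h : q ≤ m) :
    Bq m q = (q : ℝ) * (2 * m - q - 1).factorial / ((m.factorial : ℝ) * (m - q).factorial) := by
  unfold Bq; rw [if_neg hm, if_pos h]

/-- three-term recurrence -/
lemma Bq_rec (n p : ℕ) : Bq (n+1) (p+2) = Bq (n+1) (p+1) - Bq n p := by
  rcases le_or_gt (p+1) n with h | h
  · -- generic case
    obtain ⟨k, rfl⟩ : ∃ k, n = p + 1 + k := ⟨n - (p+1), by omega⟩
    rw [Bq_formula (m := p+1+k+1) (q := p+2) (by omega) (by omega),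
        Bq_formula (m := p+1+k+1) (q := p+1) (by omega) (by omega),
        Bq_formula (m := p+1+k) (q := p) (by omega) (by omega)]
    have e1 : 2 * (p+1+k+1) - (p+2) - 1 = p + 2*k + 1 := by omega
    have e2 : p+1+k+1 - (p+2) = k := by omega
    have e3 : 2 * (p+1+k+1) - (p+1) - 1 = p + 2*k + 2 := by omega
    have e4 : p+1+k+1 - (p+1) = k + 1 := by omega
    have e5 : 2 * (p+1+k) - p - 1 = p + 2*k + 1 := by omega
    have e6 : p+1+k - p = k + 1 := by omega
    rw [e1, e2, e3, e4, e5, e6]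
    have hA2 : (p + 2*k + 2).factorial = (p+2*k+2) * (p + 2*k + 1).factorial := by
      rw [show p+2*k+2 = (p+2*k+1)+1 by ring]; exact Nat.factorial_succ _
    have hB1 : (p+1+k+1).factorial = (p+1+k+1) * (p+1+k).factorial := Nat.factorial_succ _
    have hK1 : (k+1).factorial = (k+1) * k.factorial := Nat.factorial_succ _
    rw [hA2, hB1, hK1]
    have hf1 : ((p + 2*k + 1).factorial : ℝ) > 0 := by positivity
    have hf2 : ((p+1+k).factorial : ℝ) > 0 := by positivity
    have hf3 : ((k).factorial : ℝ) > 0 := by positivity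
    push_cast
    field_simp
    ring
  · rcases eq_or_lt_of_le (show n ≤ p by omega) with rfl | h2
    · -- p = n case
      rw [Bq_of_lt (by omega), Bq_self, Bq_self]
      norm_num
    · rw [Bq_of_lt (by omega), Bq_of_lt (by omega), Bq_of_lt (by omega)]
      norm_num

/-- index-up equality -/
lemma Bq_up {n p : ℕ} (hp : p ≤ n) :
    ((n:ℝ)+1)*((n:ℝ)+1-(p:ℝ)) * Bq (n+1) p = (2*(n:ℝ)-p+1)*(2*(n:ℝ)-p)*Bq n p := by
  rcases Nat.eq_zero_or_pos p with rfl | hp1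
  · rcases Nat.eq_zero_or_pos n with rfl | hn
    · have : Bq 1 0 = 0 := Bq_zero_right (by omega)
      rw [this]; norm_num
    · rw [Bq_zero_right (show n+1 ≠ 0 by omega), Bq_zero_right (show n ≠ 0 by omega)]; ring
  · obtain ⟨m, rfl⟩ : ∃ m, p = m + 1 := ⟨p - 1, by omega⟩
    obtain ⟨k, rfl⟩ : ∃ k, n = m + 1 + k := ⟨n - (m+1), by omega⟩
    rw [Bq_formula (m := m+1+k+1) (q := m+1) (by omega) (by omega),
        Bq_formula (m := m+1+k) (q := m+1) (by omega) (by omega)]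
    have e1 : 2 * (m+1+k+1) - (m+1) - 1 = m + 2*k + 2 := by omega
    have e2 : m+1+k+1 - (m+1) = k+1 := by omega
    have e3 : 2 * (m+1+k) - (m+1) - 1 = m + 2*k := by omega
    have e4 : m+1+k - (m+1) = k := by omega
    rw [e1, e2, e3, e4]
    have hA2 : (m + 2*k + 2).factorial = (m+2*k+2) * ((m+2*k+1) * (m + 2*k).factorial) := by
      rw [show m+2*k+2 = (m+2*k+1)+1 by ring, Nat.factorial_succ]
      rw [show m+2*k+1 = (m+2*k)+1 by ring, Nat.factorial_succ]
    have hB1 : (m+1+k+1).factorial = (m+1+k+1) * (m+1+k).factorial := Nat.factorial_succ _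
    have hK1 : (k+1).factorial = (k+1) * k.factorial := Nat.factorial_succ _
    rw [hA2, hB1, hK1]
    have hf1 : ((m + 2*k).factorial : ℝ) > 0 := by positivity
    have hf2 : ((m+1+k).factorial : ℝ) > 0 := by positivity
    have hf3 : ((k).factorial : ℝ) > 0 := by positivity
    push_cast
    field_simp
    ring

noncomputable def Fb (n : ℕ) (t : ℝ) : ℝ := ∑ p ∈ Finset.range (n+1), Bq n p * t^p

lemma Fb_zero (t : ℝ) : Fb 0 t = 1 := by simp [Fb, Bq_zero_zero]

lemma Fb_nonneg {t : ℝ} (ht : 0 ≤ t) (n : ℕ) : 0 ≤ Fb n t :=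
  Finset.sum_nonneg fun p _ => mul_nonneg (Bq_nonneg n p) (pow_nonneg ht p)

lemma Fb_mono {t t' : ℝ} (ht : 0 ≤ t) (h : t ≤ t') (n : ℕ) : Fb n t ≤ Fb n t' :=
  Finset.sum_le_sum fun p _ => mul_le_mul_of_nonneg_left
    (pow_le_pow_left₀ ht h p) (Bq_nonneg n p)

lemma Fb_rec (n : ℕ) (t : ℝ) :
    (1-t) * Fb (n+1) t + t^2 * Fb n t = t * catalan n := by
  set S : ℝ := ∑ p ∈ Finset.range n, (Bq (n+1) (p+1) - Bq n p) * t^(p+2) with hSdef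
  have hS1 : Fb (n+1) t = t * catalan n + S := by
    unfold Fb
    rw [Finset.sum_range_succ' (fun p => Bq (n+1) p * t^p) (n+1)]
    rw [Finset.sum_range_succ' (fun p => Bq (n+1) (p+1) * t^(p+1)) n]
    rw [Bq_zero_right (show n+1 ≠ 0 by omega), Bq_one]
    have : ∀ p ∈ Finset.range n, Bq (n+1) (p+1+1) * t^(p+1+1)
        = (Bq (n+1) (p+1) - Bq n p) * t^(p+2) := by
      intro p _
      rw [Bq_rec n p]
    rw [Finset.sum_congr rfl this]
    ring
  have e1 : t * Fb (n+1) t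
      = ∑ p ∈ Finset.range n, Bq (n+1) (p+1) * t^(p+2) + Bq (n+1) (n+1) * t^(n+2) := by
    unfold Fb
    rw [Finset.mul_sum]
    have : ∀ p ∈ Finset.range (n+2), t * (Bq (n+1) p * t^p) = Bq (n+1) p * t^(p+1) := by
      intro p _; ring
    rw [Finset.sum_congr rfl this]
    rw [Finset.sum_range_succ' (fun p => Bq (n+1) p * t^(p+1)) (n+1)]
    rw [Bq_zero_right (show n+1 ≠ 0 by omega)]
    rw [Finset.sum_range_succ (fun p => Bq (n+1) (p+1) * t^(p+1+1)) n]
    rw [Finset.sum_congr rfl (show ∀ p ∈ Finset.range n,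
      Bq (n+1) (p+1) * t^(p+1+1) = Bq (n+1) (p+1) * t^(p+2) from fun p _ => by norm_num)]
    ring
  have e2 : t^2 * Fb n t
      = ∑ p ∈ Finset.range n, Bq n p * t^(p+2) + Bq n n * t^(n+2) := by
    unfold Fb
    rw [Finset.mul_sum]
    have : ∀ p ∈ Finset.range (n+1), t^2 * (Bq n p * t^p) = Bq n p * t^(p+2) := by
      intro p _; ring
    rw [Finset.sum_congr rfl this]
    rw [Finset.sum_range_succ (fun p => Bq n p * t^(p+2)) n]
  have hS2 : t * Fb (n+1) t - t^2 * Fb n t = S := by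
    rw [e1, e2, Bq_self, Bq_self, hSdef]
    rw [Finset.sum_congr rfl (show ∀ p ∈ Finset.range n,
      (Bq (n+1) (p+1) - Bq n p) * t^(p+2)
        = Bq (n+1) (p+1) * t^(p+2) - Bq n p * t^(p+2) from fun p _ => sub_mul _ _ _)]
    rw [Finset.sum_sub_distrib]
    ring
  linear_combination hS1 - hS2

noncomputable def Sc (n : ℕ) (x : ℝ) : ℝ := ∑ k ∈ Finset.range n, (catalan k : ℝ) * x^(k+1)

lemma Sc_nonneg {x : ℝ} (hx : 0 ≤ x) (n : ℕ) : 0 ≤ Sc n x :=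
  Finset.sum_nonneg fun k _ => mul_nonneg (by positivity) (pow_nonneg hx _)

lemma Sc_succ (n : ℕ) (x : ℝ) : Sc (n+1) x = Sc n x + catalan n * x^(n+1) :=
  Finset.sum_range_succ _ n

lemma Fb_sol {t : ℝ} (ht : 1 < t) (n : ℕ) :
    Fb n t = (t^2/(t-1))^n * (1 - (t/(t-1)) * Sc n ((t^2/(t-1))⁻¹)) := by
  have ht0 : (0:ℝ) < t := by linarith
  have ht1 : t - 1 ≠ 0 := by intro h; nlinarith
  have hL : t^2/(t-1) ≠ 0 := by positivity
  induction n with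
  | zero => simp [Fb_zero, Sc]
  | succ n ih =>
    have hrec := Fb_rec n t
    have hF : Fb (n+1) t = (t^2 * Fb n t - t * catalan n)/(t-1) := by
      field_simp
      linear_combination -hrec
    rw [hF, ih, Sc_succ]
    have hinv : ((t^2/(t-1))⁻¹)^(n+1) = ((t^2/(t-1))^(n+1))⁻¹ := by
      rw [inv_pow]
    rw [hinv]
    generalize Sc n ((t^2/(t-1))⁻¹) = S
    have hI : (t^2/(t-1))^(n+1) * ((t^2/(t-1))^(n+1))⁻¹ = 1 := mul_inv_cancel₀ (pow_ne_zero _ hL)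
    linear_combination (t*(t-1)⁻¹*(catalan n:ℝ)) * hI

lemma Fb_le_pow {t : ℝ} (ht : 1 < t) (n : ℕ) : Fb n t ≤ (t^2/(t-1))^n := by
  rw [Fb_sol ht]
  have ht1 : (0:ℝ) < t - 1 := by linarith
  have ht0 : (0:ℝ) < t := by linarith
  have hL : (0:ℝ) ≤ t^2/(t-1) := by positivity
  apply mul_le_of_le_one_right (pow_nonneg hL n)
  have h1 : 0 ≤ (t/(t-1)) * Sc n ((t^2/(t-1))⁻¹) := by
    apply mul_nonneg (by positivity)
    exact Sc_nonneg (by positivity) n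
  linarith

lemma Fb_two_le (n : ℕ) : Fb n 2 ≤ 4^n := by
  induction n with
  | zero => simp [Fb_zero]
  | succ n ih =>
    have h := Fb_rec n 2
    have hc : (0:ℝ) ≤ catalan n := by positivity
    have : Fb (n+1) 2 = 4 * Fb n 2 - 2 * catalan n := by linarith
    rw [this]
    have : (4:ℝ)^(n+1) = 4 * 4^n := by ring
    rw [this]
    nlinarith

lemma Sc_succ_le {x : ℝ} (hx : 0 ≤ x) (n : ℕ) : Sc (n+1) x ≤ x + (Sc n x)^2 := by
  have key : Sc (n+1) x = x + ∑ k ∈ Finset.range n, ∑ ij ∈ Finset.HasAntidiagonal.antidiagonal k,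
      ((catalan ij.1 : ℝ) * x^(ij.1+1)) * ((catalan ij.2 : ℝ) * x^(ij.2+1)) := by
    unfold Sc
    rw [Finset.sum_range_succ' (fun k => (catalan k : ℝ) * x^(k+1)) n]
    have h0 : (catalan 0 : ℝ) * x^(0+1) = x := by simp
    rw [h0]
    have hterm : ∀ k ∈ Finset.range n, (catalan (k+1) : ℝ) * x^(k+1+1)
        = ∑ ij ∈ Finset.HasAntidiagonal.antidiagonal k,
          ((catalan ij.1 : ℝ) * x^(ij.1+1)) * ((catalan ij.2 : ℝ) * x^(ij.2+1)) := by
      intro k _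
      rw [catalan_succ' k]
      push_cast
      rw [Finset.sum_mul]
      apply Finset.sum_congr rfl
      intro ij hij
      have hk : ij.1 + ij.2 = k := Finset.HasAntidiagonal.mem_antidiagonal.mp hij
      have : x^(k+1+1) = x^(ij.1+1) * x^(ij.2+1) := by
        rw [← pow_add]; congr 1; omega
      rw [this]; ring
    rw [Finset.sum_congr rfl hterm]
    ring
  rw [key]
  have h2 : (Sc n x)^2 = ∑ i ∈ Finset.range n, ∑ j ∈ Finset.range n,
      ((catalan i : ℝ) * x^(i+1)) * ((catalan j : ℝ) * x^(j+1)) := by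
    rw [sq]
    unfold Sc
    rw [Finset.sum_mul_sum]
  rw [h2]
  have hdisj : (↑(Finset.range n) : Set ℕ).PairwiseDisjoint
      (fun k => (Finset.HasAntidiagonal.antidiagonal k : Finset (ℕ × ℕ))) := by
    intro a _ b _ hab
    simp only [Function.onFun]
    rw [Finset.disjoint_left]
    intro ij h1 h2
    have e1 := Finset.HasAntidiagonal.mem_antidiagonal.mp h1
    have e2 := Finset.HasAntidiagonal.mem_antidiagonal.mp h2
    exact hab (by omega)
  rw [← Finset.sum_biUnion hdisj, ← Finset.sum_product']
  have hsub : (Finset.range n).biUnion (fun k => Finset.HasAntidiagonal.antidiagonal k)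
      ⊆ Finset.range n ×ˢ Finset.range n := by
    intro ij hij
    rw [Finset.mem_biUnion] at hij
    obtain ⟨k, hk, hik⟩ := hij
    rw [Finset.mem_range] at hk
    have := Finset.HasAntidiagonal.mem_antidiagonal.mp hik
    rw [Finset.mem_product, Finset.mem_range, Finset.mem_range]
    omega
  have := Finset.sum_le_sum_of_subset_of_nonneg hsub
    (f := fun ij => ((catalan ij.1 : ℝ) * x^(ij.1+1)) * ((catalan ij.2 : ℝ) * x^(ij.2+1)))
    (fun ij _ _ => by positivity)
  linarith

lemma Sc_le_fix {x u : ℝ} (hx : 0 ≤ x) (hu : 0 ≤ u) (h : x + u^2 ≤ u) (n : ℕ) :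
    Sc n x ≤ u := by
  induction n with
  | zero => simpa [Sc] using hu
  | succ n ih =>
    have h1 := Sc_succ_le hx n
    have h2 : (Sc n x)^2 ≤ u^2 := by
      apply sq_le_sq' _ ih
      have := Sc_nonneg hx n
      linarith
    linarith

lemma Sc_mono {x : ℝ} (hx : 0 ≤ x) : Monotone (fun n => Sc n x) := by
  apply monotone_nat_of_le_succ
  intro n
  rw [Sc_succ]
  have : (0:ℝ) ≤ (catalan n : ℝ) * x^(n+1) := by positivity
  linarith

noncomputable def cc (p : ℕ) (a b : ℝ) : ℝ := ∑ q ∈ Finset.range (p + 1), a ^ q * b ^ (p - q)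

lemma Zt2_def (n : ℕ) (α β : ℝ) :
    Zt2 n α β = ∑ p ∈ Finset.range (n + 1), Bq n p * cc p α⁻¹ β⁻¹ := rfl

lemma cc_nonneg {a b : ℝ} (ha : 0 ≤ a) (hb : 0 ≤ b) (p : ℕ) : 0 ≤ cc p a b :=
  Finset.sum_nonneg fun q _ => mul_nonneg (pow_nonneg ha _) (pow_nonneg hb _)

lemma cc_pos {a b : ℝ} (ha : 0 < a) (hb : 0 < b) (p : ℕ) : 0 < cc p a b :=
  Finset.sum_pos (fun q _ => mul_pos (pow_pos ha _) (pow_pos hb _)) Finset.nonempty_range_add_one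

lemma cc_symm (p : ℕ) (a b : ℝ) : cc p a b = cc p b a := by
  unfold cc
  rw [← Finset.sum_range_reflect]
  apply Finset.sum_congr rfl
  intro q hq
  rw [Finset.mem_range] at hq
  have h1 : p + 1 - 1 - q = p - q := by omega
  have h2 : p - (p - q) = q := by omega
  rw [h1, h2, mul_comm]

lemma cc_one (a b : ℝ) : cc 1 a b = b + a := by
  unfold cc
  rw [Finset.sum_range_succ, Finset.sum_range_one]
  norm_num

lemma cc_le_two {a b : ℝ} (ha : 0 ≤ a) (ha2 : a ≤ 2) (hb : 0 ≤ b) (hb2 : b ≤ 2) (p : ℕ) :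
    cc p a b ≤ ((p:ℝ)+1) * 2^p := by
  have : ∀ q ∈ Finset.range (p+1), a^q * b^(p-q) ≤ 2^p := by
    intro q hq
    rw [Finset.mem_range] at hq
    have h1 : a^q ≤ 2^q := pow_le_pow_left₀ ha ha2 q
    have h2 : b^(p-q) ≤ 2^(p-q) := pow_le_pow_left₀ hb hb2 _
    have h3 : (2:ℝ)^q * 2^(p-q) = 2^p := by
      rw [← pow_add]; congr 1; omega
    calc a^q * b^(p-q) ≤ 2^q * 2^(p-q) := by
          apply mul_le_mul h1 h2 (pow_nonneg hb _) (by positivity)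
      _ = 2^p := h3
  calc cc p a b ≤ ∑ _q ∈ Finset.range (p+1), (2:ℝ)^p := Finset.sum_le_sum this
    _ = ((p:ℝ)+1) * 2^p := by
        rw [Finset.sum_const, Finset.card_range, nsmul_eq_mul]; push_cast; ring

lemma cc_mul_sub (p : ℕ) (a b : ℝ) : (a - b) * cc p a b = a^(p+1) - b^(p+1) := by
  have h := geom_sum₂_mul a b (p+1)
  rw [← h]
  unfold cc
  rw [Finset.sum_congr rfl (show ∀ q ∈ Finset.range (p+1),
    a^q * b^(p-q) = a^q * b^(p+1-1-q) from fun q hq => by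
      have h : p - q = p + 1 - 1 - q := by omega
      rw [h])]
  ring

lemma Zt2_pos {α β : ℝ} (hα : 0 < α) (hβ : 0 < β) (n : ℕ) : 0 < Zt2 n α β := by
  rw [Zt2_def]
  apply Finset.sum_pos'
  · intro p _
    exact mul_nonneg (Bq_nonneg n p) (cc_nonneg (by positivity) (by positivity) p)
  · refine ⟨n, Finset.self_mem_range_succ n, ?_⟩
    rw [Bq_self, one_mul]
    exact cc_pos (by positivity) (by positivity) n

lemma Zt2_symm (n : ℕ) (α β : ℝ) : Zt2 n α β = Zt2 n β α := by
  rw [Zt2_def, Zt2_def]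
  exact Finset.sum_congr rfl fun p _ => by rw [cc_symm]

lemma Zt2_sub (n : ℕ) (α β : ℝ) :
    (α⁻¹ - β⁻¹) * Zt2 n α β = α⁻¹ * Fb n α⁻¹ - β⁻¹ * Fb n β⁻¹ := by
  rw [Zt2_def]
  unfold Fb
  rw [Finset.mul_sum, Finset.mul_sum, Finset.mul_sum, ← Finset.sum_sub_distrib]
  apply Finset.sum_congr rfl
  intro p _
  have h := cc_mul_sub p α⁻¹ β⁻¹
  calc (α⁻¹ - β⁻¹) * (Bq n p * cc p α⁻¹ β⁻¹)
      = Bq n p * ((α⁻¹ - β⁻¹) * cc p α⁻¹ β⁻¹) := by ring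
    _ = Bq n p * (α⁻¹^(p+1) - β⁻¹^(p+1)) := by rw [h]
    _ = α⁻¹ * (Bq n p * α⁻¹^p) - β⁻¹ * (Bq n p * β⁻¹^p) := by ring

lemma Zt2_lower {α β : ℝ} (hα : 0 < α) (hβ : 0 < β) (n : ℕ) :
    (catalan n : ℝ) * (α⁻¹ + β⁻¹) ≤ Zt2 (n+1) α β := by
  rw [Zt2_def]
  have key : (catalan n : ℝ) * (α⁻¹ + β⁻¹) = Bq (n+1) 1 * cc 1 α⁻¹ β⁻¹ := by
    rw [Bq_one, cc_one]; ring
  rw [key]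
  exact Finset.single_le_sum (f := fun p => Bq (n+1) p * cc p α⁻¹ β⁻¹)
    (fun p _ => mul_nonneg (Bq_nonneg _ p) (cc_nonneg (by positivity) (by positivity) p))
    (by rw [Finset.mem_range]; omega)

lemma Bq_low {n p : ℕ} (hp : p ≤ n) :
    (4*(n:ℝ) - 2) * Bq n p ≤ ((n:ℝ)+1) * Bq (n+1) p := by
  have hm : (0:ℝ) < (n:ℝ)+1-p := by
    have : (p:ℝ) ≤ n := by exact_mod_cast hp
    linarith
  apply le_of_mul_le_mul_right _ hm
  have hup := Bq_up hp
  have hint : (4*(n:ℝ)-2) * ((n:ℝ)+1-p) ≤ (2*(n:ℝ)-p+1)*(2*(n:ℝ)-p) := by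
    have hpn : (p:ℝ) ≤ n := by exact_mod_cast hp
    have h12 : (0:ℝ) ≤ ((p:ℝ)-1) * ((p:ℝ)-2) := by
      rcases p with _ | _ | p
      · norm_num
      · norm_num
      · push_cast
        nlinarith [Nat.cast_nonneg (α := ℝ) p]
    nlinarith
  calc (4*(n:ℝ) - 2) * Bq n p * ((n:ℝ)+1-p)
      = ((4*(n:ℝ)-2) * ((n:ℝ)+1-p)) * Bq n p := by ring
    _ ≤ ((2*(n:ℝ)-p+1)*(2*(n:ℝ)-p)) * Bq n p := by
        apply mul_le_mul_of_nonneg_right hint (Bq_nonneg n p)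
    _ = ((n:ℝ)+1)*((n:ℝ)+1-(p:ℝ)) * Bq (n+1) p := hup.symm
    _ = ((n:ℝ)+1) * Bq (n+1) p * ((n:ℝ)+1-p) := by ring

lemma Zt2_ratio_lower {α β : ℝ} (hα : 0 < α) (hβ : 0 < β) (n : ℕ) :
    (4*(n:ℝ) - 2) * Zt2 n α β ≤ ((n:ℝ)+1) * Zt2 (n+1) α β := by
  rw [Zt2_def, Zt2_def, Finset.mul_sum, Finset.mul_sum]
  rw [Finset.sum_range_succ (fun p => ((n:ℝ)+1) * (Bq (n+1) p * cc p α⁻¹ β⁻¹)) (n+1)]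
  have hlast : 0 ≤ ((n:ℝ)+1) * (Bq (n+1) (n+1) * cc (n+1) α⁻¹ β⁻¹) := by
    apply mul_nonneg (by positivity)
    exact mul_nonneg (Bq_nonneg _ _) (cc_nonneg (by positivity) (by positivity) _)
  have hle : ∀ p ∈ Finset.range (n+1),
      (4*(n:ℝ) - 2) * (Bq n p * cc p α⁻¹ β⁻¹)
        ≤ ((n:ℝ)+1) * (Bq (n+1) p * cc p α⁻¹ β⁻¹) := by
    intro p hp
    rw [Finset.mem_range] at hp
    have h := Bq_low (show p ≤ n by omega)
    have hcc : 0 ≤ cc p α⁻¹ β⁻¹ := cc_nonneg (by positivity) (by positivity) p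
    calc (4*(n:ℝ) - 2) * (Bq n p * cc p α⁻¹ β⁻¹)
        = ((4*(n:ℝ) - 2) * Bq n p) * cc p α⁻¹ β⁻¹ := by ring
      _ ≤ (((n:ℝ)+1) * Bq (n+1) p) * cc p α⁻¹ β⁻¹ := mul_le_mul_of_nonneg_right h hcc
      _ = ((n:ℝ)+1) * (Bq (n+1) p * cc p α⁻¹ β⁻¹) := by ring
  have := Finset.sum_le_sum hle
  linarith

lemma catalan_lb {m : ℕ} (hm : 4 ≤ m) : (4:ℝ)^m ≤ ((m:ℝ)+1)^2 * catalan m := by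
  have h := Nat.four_pow_lt_mul_centralBinom m hm
  have h2 : m.centralBinom = (m+1) * catalan m := (succ_mul_catalan_eq_centralBinom m).symm
  rw [h2] at h
  have : (4:ℕ)^m ≤ (m+1) * ((m+1) * catalan m) := by
    calc (4:ℕ)^m ≤ m * ((m+1) * catalan m) := le_of_lt h
      _ ≤ (m+1) * ((m+1) * catalan m) := by
          apply Nat.mul_le_mul_right; omega
  calc (4:ℝ)^m = ((4^m : ℕ) : ℝ) := by push_cast; ring
    _ ≤ (((m+1) * ((m+1) * catalan m) : ℕ) : ℝ) := by exact_mod_cast this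
    _ = ((m:ℝ)+1)^2 * catalan m := by push_cast; ring

lemma tendsto_poly_geom (k : ℕ) {r : ℝ} (h0 : 0 ≤ r) (h1 : r < 1) :
    Tendsto (fun n : ℕ => ((n:ℝ)+2)^k * r^(n+1)) atTop (nhds 0) := by
  have hbase : Tendsto (fun m : ℕ => (2:ℝ)^k * ((m:ℝ)^k * r^m)) atTop (nhds 0) := by
    have := (tendsto_pow_const_mul_const_pow_of_lt_one k h0 h1).const_mul ((2:ℝ)^k)
    simpa using this
  have hshift : Tendsto (fun n : ℕ => (2:ℝ)^k * (((n+1:ℕ):ℝ)^k * r^(n+1))) atTop (nhds 0) :=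
    hbase.comp (tendsto_add_atTop_nat 1)
  apply squeeze_zero (fun n => by positivity) _ hshift
  intro n
  have hle : ((n:ℝ)+2)^k ≤ (2:ℝ)^k * ((n+1:ℕ):ℝ)^k := by
    rw [← mul_pow]
    apply pow_le_pow_left₀ (by positivity)
    push_cast; linarith
  calc ((n:ℝ)+2)^k * r^(n+1) ≤ ((2:ℝ)^k * ((n+1:ℕ):ℝ)^k) * r^(n+1) :=
        mul_le_mul_of_nonneg_right hle (pow_nonneg h0 _)
    _ = (2:ℝ)^k * (((n+1:ℕ):ℝ)^k * r^(n+1)) := by ring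

lemma tendsto_of_pow_le {y g : ℕ → ℝ} {M : ℕ} (hM : 1 ≤ M) (hy : ∀ n, 0 ≤ y n)
    (hb : ∀ n, (y n)^M ≤ g n) (hg : Tendsto g atTop (nhds 0)) :
    Tendsto y atTop (nhds 0) := by
  rw [Metric.tendsto_atTop] at hg ⊢
  intro ε hε
  obtain ⟨N, hN⟩ := hg (ε^M) (by positivity)
  refine ⟨N, fun n hn => ?_⟩
  have h1 := hN n hn
  rw [Real.dist_eq, sub_zero] at h1 ⊢
  rw [abs_of_nonneg (hy n)]
  by_contra hcon
  push_neg at hcon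
  have h2 : ε^M ≤ (y n)^M := pow_le_pow_left₀ (le_of_lt hε) hcon M
  have h3 : g n < ε^M := lt_of_abs_lt h1
  have := hb n
  linarith

lemma key_poly {M : ℕ} (hM : 2 ≤ M) :
    (((1+1/(4*(M:ℝ)))^2/(2*(1+1/(4*(M:ℝ)))-1)))^M < 1+1/(4*(M:ℝ)) := by
  set η : ℝ := 1/(4*(M:ℝ)) with hηdef
  have hM2 : (2:ℝ) ≤ (M:ℝ) := by exact_mod_cast hM
  have hη0 : 0 < η := by rw [hηdef]; positivity
  have hη8 : η ≤ 1/8 := by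
    rw [hηdef]
    rw [div_le_div_iff₀ (by linarith) (by norm_num)]
    linarith
  have hMη : (M:ℝ) * η = 1/4 := by
    rw [hηdef]; field_simp
  set x : ℝ := η^2/(1+2*η) with hxdef
  have hx0 : 0 < x := by rw [hxdef]; positivity
  have hx1 : x < 1 := by
    rw [hxdef, div_lt_one (by linarith)]
    nlinarith
  have hMx : (M:ℝ) * x ≤ η/4 := by
    rw [hxdef]
    have heq : (M:ℝ) * (η^2/(1+2*η)) = ((M:ℝ)*η^2)/(1+2*η) := by ring
    rw [heq, div_le_div_iff₀ (by linarith) (by norm_num)]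
    nlinarith
  have hsq : (1+η)^2 = (1+2*η) * (1+x) := by
    rw [hxdef]
    field_simp
    ring
  have h2θ : 2*(1+η)-1 = 1+2*η := by ring
  rw [h2θ, div_pow, hsq, mul_pow]
  have h1 : (1+x)^M * (1-x)^M ≤ 1 := by
    rw [← mul_pow]
    apply pow_le_one₀ (by nlinarith) (by nlinarith)
  have h2 : 1 - (M:ℝ)*x ≤ (1-x)^M := by
    have := one_add_mul_le_pow (a := -x) (by linarith) M
    calc 1 - (M:ℝ)*x = 1 + (M:ℝ)*(-x) := by ring
      _ ≤ (1+(-x))^M := this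
      _ = (1-x)^M := by ring_nf
  have hMx0 : 0 < 1 - (M:ℝ)*x := by linarith
  have h3 : (1+x)^M ≤ 1/(1-(M:ℝ)*x) := by
    rw [le_div_iff₀ hMx0]
    have h1x : (0:ℝ) < (1-x)^M := pow_pos (by linarith) M
    have hxp : (0:ℝ) < (1+x)^M := pow_pos (by linarith) M
    calc (1+x)^M * (1-(M:ℝ)*x) ≤ (1+x)^M * (1-x)^M := by
          apply mul_le_mul_of_nonneg_left h2 (le_of_lt hxp)
      _ ≤ 1 := h1
  have h4 : 1/(1-(M:ℝ)*x) < 1+η := by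
    rw [div_lt_iff₀ hMx0]
    nlinarith
  have h5 : (0:ℝ) < (1+2*η)^M := pow_pos (by linarith) M
  rw [div_lt_iff₀ h5]
  calc (1+2*η)^M * (1+x)^M ≤ (1+2*η)^M * (1/(1-(M:ℝ)*x)) := by
        apply mul_le_mul_of_nonneg_left h3 (le_of_lt h5)
    _ < (1+2*η)^M * (1+η) := by
        apply mul_lt_mul_of_pos_left h4 h5
    _ = (1+η) * (1+2*η)^M := by ring

lemma LD_tendsto {α β : ℝ} (hα : 0 < α) (hβ : 0 < β) (h2 : α < 1/2) (hab : α < β) :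
    Tendsto (fun n : ℕ => Zt2 (n - 1) α β / Zt2 n α β) atTop (nhds (α * (1 - α))) := by
  have ha0 : (0:ℝ) < α⁻¹ := by positivity
  have hb0 : (0:ℝ) < β⁻¹ := by positivity
  set a : ℝ := α⁻¹ with hadef
  set b : ℝ := β⁻¹ with hbdef
  have ha2 : 2 < a := by
    rw [hadef, ← one_div, lt_div_iff₀ hα]; linarith
  have hba : b < a := by
    rw [hadef, hbdef]
    exact inv_strictAnti₀ hα hab
  have ha1 : (0:ℝ) < a - 1 := by linarith
  set lam : ℝ := a^2/(a-1) with hlamdef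
  have hlam0 : (0:ℝ) < lam := by rw [hlamdef]; positivity
  have hlam4 : 4 < lam := by
    rw [hlamdef, lt_div_iff₀ ha1]; nlinarith
  have hx0 : (0:ℝ) < lam⁻¹ := by positivity
  -- fixed point bound for Sc
  have hfix : lam⁻¹ + (a⁻¹)^2 ≤ a⁻¹ := by
    apply le_of_eq
    rw [hlamdef, inv_div]
    have ha0' : (0:ℝ) < a := by linarith
    field_simp
    ring
  have hSle : ∀ n, Sc n lam⁻¹ ≤ a⁻¹ := fun n =>
    Sc_le_fix (le_of_lt hx0) (by positivity) hfix n
  -- limit of Sc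
  have hbdd : BddAbove (Set.range fun n => Sc n lam⁻¹) := by
    refine ⟨a⁻¹, ?_⟩
    rintro y ⟨n, rfl⟩
    exact hSle n
  have hStend : Tendsto (fun n => Sc n lam⁻¹) atTop (nhds (⨆ n, Sc n lam⁻¹)) :=
    tendsto_atTop_ciSup (Sc_mono (le_of_lt hx0)) hbdd
  set ell : ℝ := ⨆ n, Sc n lam⁻¹ with helldef
  have hell : ell ≤ a⁻¹ := ciSup_le hSle
  set L : ℝ := 1 - (a/(a-1)) * ell with hLdef
  have hL0 : 0 < L := by
    rw [hLdef]
    have h1 : (a/(a-1)) * ell ≤ (a/(a-1)) * a⁻¹ := by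
      apply mul_le_mul_of_nonneg_left hell (by positivity)
    have h2 : (a/(a-1)) * a⁻¹ = 1/(a-1) := by
      field_simp
    have h3 : 1/(a-1) < 1 := by
      rw [div_lt_one ha1]; linarith
    linarith
  -- a-part tends to a*L
  have hFa : ∀ n, Fb n a * (lam⁻¹)^n = 1 - (a/(a-1)) * Sc n lam⁻¹ := by
    intro n
    rw [Fb_sol (by linarith : 1 < a) n, ← hlamdef]
    rw [inv_pow]
    have hlampow : (0:ℝ) < lam^n := pow_pos hlam0 n
    field_simp
  have haL : Tendsto (fun n => a * (Fb n a * (lam⁻¹)^n)) atTop (nhds (a * L)) := by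
    have h1 : Tendsto (fun n => 1 - (a/(a-1)) * Sc n lam⁻¹) atTop (nhds L) := by
      rw [hLdef]
      exact (tendsto_const_nhds.sub ((hStend.const_mul _)))
    have h2 := h1.const_mul a
    apply h2.congr
    intro n
    rw [hFa n]
  -- b-part tends to 0
  have hbdecay : Tendsto (fun n => b * (Fb n b * (lam⁻¹)^n)) atTop (nhds 0) := by
    obtain ⟨μ, hμ0, hμlam, hFle⟩ : ∃ μ : ℝ, 0 ≤ μ ∧ μ < lam ∧ ∀ n, Fb n b ≤ μ^n := by
      rcases le_or_gt b 2 with hble | hbgt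
      · exact ⟨4, by norm_num, hlam4, fun n => le_trans (Fb_mono (le_of_lt hb0) hble n) (Fb_two_le n)⟩
      · have hb1 : (0:ℝ) < b - 1 := by linarith
        refine ⟨b^2/(b-1), le_of_lt (div_pos (by positivity) hb1), ?_, fun n => Fb_le_pow (by linarith) n⟩
        rw [hlamdef, div_lt_div_iff₀ hb1 ha1]
        have hkey : (0:ℝ) < a*b - a - b := by nlinarith
        nlinarith [mul_pos (sub_pos.2 hba) hkey]
    have hr0 : 0 ≤ μ * lam⁻¹ := mul_nonneg hμ0 (inv_nonneg.2 hlam0.le)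
    have hr1 : μ * lam⁻¹ < 1 := by
      rw [← div_eq_mul_inv, div_lt_one hlam0]; exact hμlam
    apply squeeze_zero
      (fun n => mul_nonneg hb0.le (mul_nonneg (Fb_nonneg hb0.le n) (by positivity)))
      (g := fun n => b * (μ * lam⁻¹)^n)
    · intro n
      rw [mul_pow]
      apply mul_le_mul_of_nonneg_left _ (le_of_lt hb0)
      exact mul_le_mul_of_nonneg_right (hFle n) (by positivity)
    · have := (tendsto_pow_atTop_nhds_zero_of_lt_one hr0 hr1).const_mul b
      simpa using this
  -- W tends to a*L/(a-b)
  have hab' : (0:ℝ) < a - b := by linarith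
  set W : ℕ → ℝ := fun n => Zt2 n α β * (lam⁻¹)^n with hWdef
  have hWeq : ∀ n, W n = (a * (Fb n a * (lam⁻¹)^n) - b * (Fb n b * (lam⁻¹)^n)) / (a - b) := by
    intro n
    have h := Zt2_sub n α β
    rw [← hadef, ← hbdef] at h
    rw [hWdef, eq_div_iff (ne_of_gt hab')]
    calc Zt2 n α β * (lam⁻¹)^n * (a - b) = ((a - b) * Zt2 n α β) * (lam⁻¹)^n := by ring
      _ = (a * Fb n a - b * Fb n b) * (lam⁻¹)^n := by rw [h]
      _ = a * (Fb n a * (lam⁻¹)^n) - b * (Fb n b * (lam⁻¹)^n) := by ring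
  set Wlim : ℝ := a * L / (a - b) with hWlimdef
  have hWlim0 : 0 < Wlim := by
    rw [hWlimdef]
    apply div_pos (mul_pos (by linarith) hL0) hab'
  have hWtend : Tendsto W atTop (nhds Wlim) := by
    have := (haL.sub hbdecay).div_const (a - b)
    rw [sub_zero] at this
    apply this.congr
    intro n
    rw [hWeq n]
  -- conclude
  have hWshift : Tendsto (fun n => W (n-1)) atTop (nhds Wlim) :=
    hWtend.comp (tendsto_sub_atTop_nat 1)
  have hratio : Tendsto (fun n => lam⁻¹ * (W (n-1) / W n)) atTop
      (nhds (lam⁻¹ * (Wlim / Wlim))) :=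
    (hWshift.div hWtend (ne_of_gt hWlim0)).const_mul _
  rw [div_self (ne_of_gt hWlim0), mul_one] at hratio
  have heq : (fun n : ℕ => lam⁻¹ * (W (n-1) / W n)) =ᶠ[atTop]
      (fun n : ℕ => Zt2 (n - 1) α β / Zt2 n α β) := by
    rw [Filter.EventuallyEq, eventually_atTop]
    refine ⟨1, fun n hn => ?_⟩
    obtain ⟨m, rfl⟩ : ∃ m, n = m + 1 := ⟨n - 1, by omega⟩
    have hZ1 : (0:ℝ) < Zt2 (m+1) α β := Zt2_pos hα hβ (m+1)
    have hZ0 : (0:ℝ) < Zt2 m α β := Zt2_pos hα hβ m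
    simp only [hWdef, Nat.add_sub_cancel]
    rw [pow_succ]
    have hlamn : (0:ℝ) < lam⁻¹^m := pow_pos hx0 m
    field_simp
  have hfinal := hratio.congr' heq
  have hxval : lam⁻¹ = α * (1 - α) := by
    rw [hlamdef, hadef, inv_div]
    rw [show (α⁻¹)^2 = α⁻¹ * α⁻¹ by ring]
    field_simp
  rwa [hxval] at hfinal

lemma Bq_bulk {n p P : ℕ} (hp : p ≤ P) (hP : P ≤ n) :
    ((n:ℝ)+1-P) * Bq (n+1) p ≤ 4*((n:ℝ)+1) * Bq n p := by
  have hup := Bq_up (show p ≤ n by omega)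
  have hpn : (p:ℝ) ≤ n := by exact_mod_cast (show p ≤ n by omega)
  have hPn : (P:ℝ) ≤ n := by exact_mod_cast hP
  have hpP : (p:ℝ) ≤ P := by exact_mod_cast hp
  have hn1 : (0:ℝ) < (n:ℝ)+1 := by positivity
  apply le_of_mul_le_mul_left _ hn1
  have hB1 : 0 ≤ Bq (n+1) p := Bq_nonneg _ _
  have hB0 : 0 ≤ Bq n p := Bq_nonneg _ _
  calc ((n:ℝ)+1) * (((n:ℝ)+1-P) * Bq (n+1) p)
      ≤ ((n:ℝ)+1) * (((n:ℝ)+1-p) * Bq (n+1) p) := by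
        apply mul_le_mul_of_nonneg_left _ (le_of_lt hn1)
        apply mul_le_mul_of_nonneg_right _ hB1
        linarith
    _ = ((n:ℝ)+1)*((n:ℝ)+1-(p:ℝ)) * Bq (n+1) p := by ring
    _ = (2*(n:ℝ)-p+1)*(2*(n:ℝ)-p)*Bq n p := hup
    _ ≤ (2*(n:ℝ)+2)*(2*(n:ℝ)+2)*Bq n p := by
        apply mul_le_mul_of_nonneg_right _ hB0
        have h1 : 2*(n:ℝ)-p+1 ≤ 2*(n:ℝ)+2 := by linarith
        have h2 : 2*(n:ℝ)-p ≤ 2*(n:ℝ)+2 := by linarith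
        have h3 : (0:ℝ) ≤ 2*(n:ℝ)-p+1 := by linarith
        have h4 : (0:ℝ) ≤ 2*(n:ℝ)-p := by linarith
        nlinarith
    _ = ((n:ℝ)+1) * (4*((n:ℝ)+1) * Bq n p) := by ring

lemma MC_upper_aux {α β e : ℝ} (hα : 0 < α) (hβ : 0 < β) (ha2 : α⁻¹ ≤ 2) (hb2 : β⁻¹ ≤ 2)
    (he : 0 < e) (θ B : ℝ) (P : ℕ → ℕ)
    (hθ1 : 1 < θ) (hB0 : 0 < B)
    (hFB : ∀ n, Fb n (2*θ) ≤ (4*B)^n)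
    (evP : ∀ᶠ n : ℕ in atTop, P n ≤ n)
    (evBulk : ∀ᶠ n : ℕ in atTop, (4:ℝ)*((n:ℝ)+1) ≤ (4+e/2)*(((n:ℝ)+1)-(P n : ℝ)))
    (evD : ∀ᶠ n : ℕ in atTop,
      ((n:ℝ)+2)^4 * (θ⁻¹)^(P n) * B^(n+1) < (e/2)*(α⁻¹+β⁻¹)/16) :
    ∀ᶠ n in atTop, Zt2 (n+1) α β ≤ (4+e) * Zt2 n α β := by
  have ha0 : (0:ℝ) < α⁻¹ := by positivity
  have hb0 : (0:ℝ) < β⁻¹ := by positivity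
  have hθ0 : (0:ℝ) < θ := by linarith
  have ev1 : ∀ᶠ n : ℕ in atTop, 5 ≤ n := eventually_ge_atTop 5
  filter_upwards [ev1, evP, evBulk, evD] with n h5 hPn hbulkc hDn
  have hsplit := Finset.sum_range_add_sum_Ico
    (fun p => Bq (n+1) p * cc p α⁻¹ β⁻¹) (show P n + 1 ≤ n+2 by omega)
  rw [Zt2_def]
  rw [← hsplit]
  have hccnn : ∀ p, 0 ≤ cc p α⁻¹ β⁻¹ := fun p => cc_nonneg ha0.le hb0.le p
  -- bulk bound
  have hbulk : ∑ p ∈ Finset.range (P n + 1), Bq (n+1) p * cc p α⁻¹ β⁻¹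
      ≤ (4+e/2) * Zt2 n α β := by
    have hstep : (((n:ℝ)+1)-(P n : ℝ)) * ∑ p ∈ Finset.range (P n + 1), Bq (n+1) p * cc p α⁻¹ β⁻¹
        ≤ 4*((n:ℝ)+1) * Zt2 n α β := by
      rw [Finset.mul_sum]
      have hterm : ∀ p ∈ Finset.range (P n + 1),
          (((n:ℝ)+1)-(P n : ℝ)) * (Bq (n+1) p * cc p α⁻¹ β⁻¹)
            ≤ 4*((n:ℝ)+1) * (Bq n p * cc p α⁻¹ β⁻¹) := by
        intro p hp
        rw [Finset.mem_range] at hp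
        have h := Bq_bulk (show p ≤ P n by omega) hPn
        calc (((n:ℝ)+1)-(P n : ℝ)) * (Bq (n+1) p * cc p α⁻¹ β⁻¹)
            = ((((n:ℝ)+1)-(P n:ℝ)) * Bq (n+1) p) * cc p α⁻¹ β⁻¹ := by ring
          _ ≤ (4*((n:ℝ)+1) * Bq n p) * cc p α⁻¹ β⁻¹ :=
              mul_le_mul_of_nonneg_right h (hccnn p)
          _ = 4*((n:ℝ)+1) * (Bq n p * cc p α⁻¹ β⁻¹) := by ring
      calc ∑ p ∈ Finset.range (P n + 1), (((n:ℝ)+1)-(P n : ℝ)) * (Bq (n+1) p * cc p α⁻¹ β⁻¹)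
          ≤ ∑ p ∈ Finset.range (P n + 1), 4*((n:ℝ)+1) * (Bq n p * cc p α⁻¹ β⁻¹) :=
            Finset.sum_le_sum hterm
        _ ≤ ∑ p ∈ Finset.range (n + 1), 4*((n:ℝ)+1) * (Bq n p * cc p α⁻¹ β⁻¹) := by
            apply Finset.sum_le_sum_of_subset_of_nonneg
            · apply Finset.range_subset_range.mpr; omega
            · intro p _ _
              have h1 := Bq_nonneg n p
              have h2 := hccnn p
              positivity
        _ = 4*((n:ℝ)+1) * Zt2 n α β := by
            rw [Zt2_def, Finset.mul_sum]
    have hposP : (0:ℝ) < ((n:ℝ)+1)-(P n : ℝ) := by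
      have : (P n : ℝ) ≤ n := by exact_mod_cast hPn
      linarith
    have hZnn : 0 ≤ Zt2 n α β := (Zt2_pos hα hβ n).le
    apply le_of_mul_le_mul_left _ hposP
    calc (((n:ℝ)+1)-(P n : ℝ)) * ∑ p ∈ Finset.range (P n + 1), Bq (n+1) p * cc p α⁻¹ β⁻¹
        ≤ 4*((n:ℝ)+1) * Zt2 n α β := hstep
      _ ≤ ((4+e/2)*(((n:ℝ)+1)-(P n : ℝ))) * Zt2 n α β := by
          apply mul_le_mul_of_nonneg_right _ hZnn
          linarith [hbulkc]
      _ = (((n:ℝ)+1)-(P n : ℝ)) * ((4+e/2) * Zt2 n α β) := by ring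
  -- tail bound
  have htail : ∑ p ∈ Finset.Ico (P n + 1) (n+2), Bq (n+1) p * cc p α⁻¹ β⁻¹
      ≤ (e/2) * Zt2 n α β := by
    have hterm : ∀ p ∈ Finset.Ico (P n + 1) (n+2),
        Bq (n+1) p * cc p α⁻¹ β⁻¹
          ≤ ((n:ℝ)+2) * (θ⁻¹)^(P n) * (Bq (n+1) p * (2*θ)^p) := by
      intro p hp
      rw [Finset.mem_Ico] at hp
      have hcc : cc p α⁻¹ β⁻¹ ≤ ((p:ℝ)+1) * 2^p := cc_le_two ha0.le ha2 hb0.le hb2 p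
      have hp1 : ((p:ℝ)+1) ≤ (n:ℝ)+2 := by
        have h1 : p ≤ n+1 := by omega
        have h2 : (p:ℝ) ≤ (n:ℝ)+1 := by exact_mod_cast h1
        linarith
      have h2p : (2:ℝ)^p ≤ (2*θ)^p * (θ⁻¹)^(P n) := by
        have hinv : (θ⁻¹)^p ≤ (θ⁻¹)^(P n) :=
          pow_le_pow_of_le_one (by positivity)
            (by rw [inv_le_one_iff₀]; right; linarith) (by omega)
        calc (2:ℝ)^p = (2*θ)^p * (θ⁻¹)^p := by
              rw [← mul_pow]
              rw [show 2*θ*θ⁻¹ = 2*(θ*θ⁻¹) by ring, mul_inv_cancel₀ (ne_of_gt hθ0)]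
              norm_num
          _ ≤ (2*θ)^p * (θ⁻¹)^(P n) := by
              apply mul_le_mul_of_nonneg_left hinv (by positivity)
      have hBnn := Bq_nonneg (n+1) p
      calc Bq (n+1) p * cc p α⁻¹ β⁻¹
          ≤ Bq (n+1) p * (((p:ℝ)+1) * 2^p) :=
            mul_le_mul_of_nonneg_left hcc hBnn
        _ ≤ Bq (n+1) p * (((n:ℝ)+2) * ((2*θ)^p * (θ⁻¹)^(P n))) := by
            apply mul_le_mul_of_nonneg_left _ hBnn
            calc ((p:ℝ)+1) * 2^p ≤ ((n:ℝ)+2) * 2^p := by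
                  apply mul_le_mul_of_nonneg_right hp1 (by positivity)
              _ ≤ ((n:ℝ)+2) * ((2*θ)^p * (θ⁻¹)^(P n)) := by
                  apply mul_le_mul_of_nonneg_left h2p (by positivity)
        _ = ((n:ℝ)+2) * (θ⁻¹)^(P n) * (Bq (n+1) p * (2*θ)^p) := by ring
    have hFsum : ∑ p ∈ Finset.Ico (P n + 1) (n+2), Bq (n+1) p * (2*θ)^p
        ≤ Fb (n+1) (2*θ) := by
      unfold Fb
      apply Finset.sum_le_sum_of_subset_of_nonneg
      · intro p hp
        rw [Finset.mem_Ico] at hp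
        rw [Finset.mem_range]
        omega
      · intro p _ _
        have h1 := Bq_nonneg (n+1) p
        positivity
    have hZlow : (α⁻¹+β⁻¹) * 4^(n-1) / ((n:ℝ))^2 ≤ Zt2 n α β := by
      obtain ⟨m, rfl⟩ : ∃ m, n = m + 1 := ⟨n - 1, by omega⟩
      have h1 : (catalan m : ℝ) * (α⁻¹ + β⁻¹) ≤ Zt2 (m+1) α β := Zt2_lower hα hβ m
      have h2 : (4:ℝ)^m ≤ ((m:ℝ)+1)^2 * catalan m := catalan_lb (by omega)
      have hm1 : m + 1 - 1 = m := by omega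
      rw [hm1]
      rw [div_le_iff₀ (by positivity)]
      have hcat : (0:ℝ) ≤ catalan m := by positivity
      push_cast
      nlinarith [mul_le_mul_of_nonneg_right h2 (show (0:ℝ) ≤ α⁻¹+β⁻¹ by positivity)]
    -- combine tail
    have hDbound : ((n:ℝ)+2) * (θ⁻¹)^(P n) * (4*B)^(n+1)
        ≤ (e/2) * ((α⁻¹+β⁻¹) * 4^(n-1) / ((n:ℝ))^2) := by
      have hn2 : (0:ℝ) < (n:ℝ)^2 := by
        have : (5:ℝ) ≤ n := by exact_mod_cast h5
        positivity
      rw [show (e/2) * ((α⁻¹+β⁻¹) * 4^(n-1) / ((n:ℝ))^2)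
          = (e/2) * ((α⁻¹+β⁻¹) * 4^(n-1)) / ((n:ℝ))^2 by ring]
      rw [le_div_iff₀ hn2]
      have h4 : (4:ℝ)^(n+1) = 16 * 4^(n-1) := by
        rw [show n+1 = (n-1) + 2 by omega, pow_add]
        ring
      have hDge : ((n:ℝ)+2) * (θ⁻¹)^(P n) * B^(n+1) * (n:ℝ)^2
          ≤ ((n:ℝ)+2)^4 * (θ⁻¹)^(P n) * B^(n+1) := by
        have hfac : ((n:ℝ)+2) * (n:ℝ)^2 ≤ ((n:ℝ)+2)^4 := by
          have hn0 : (0:ℝ) ≤ n := by positivity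
          nlinarith
        calc ((n:ℝ)+2) * (θ⁻¹)^(P n) * B^(n+1) * (n:ℝ)^2
            = (((n:ℝ)+2) * (n:ℝ)^2) * ((θ⁻¹)^(P n) * B^(n+1)) := by ring
          _ ≤ ((n:ℝ)+2)^4 * ((θ⁻¹)^(P n) * B^(n+1)) := by
              apply mul_le_mul_of_nonneg_right hfac
              positivity
          _ = ((n:ℝ)+2)^4 * (θ⁻¹)^(P n) * B^(n+1) := by ring
      have h16 : 16 * (((n:ℝ)+2)^4 * (θ⁻¹)^(P n) * B^(n+1)) ≤ (e/2) * (α⁻¹+β⁻¹) := by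
        linarith [hDn]
      calc ((n:ℝ)+2) * (θ⁻¹)^(P n) * (4*B)^(n+1) * (n:ℝ)^2
          = 16 * (((n:ℝ)+2) * (θ⁻¹)^(P n) * B^(n+1) * (n:ℝ)^2) * 4^(n-1) := by
            rw [mul_pow, h4]; ring
        _ ≤ 16 * (((n:ℝ)+2)^4 * (θ⁻¹)^(P n) * B^(n+1)) * 4^(n-1) := by
            apply mul_le_mul_of_nonneg_right _ (by positivity)
            apply mul_le_mul_of_nonneg_left hDge (by norm_num)
        _ ≤ ((e/2) * (α⁻¹+β⁻¹)) * 4^(n-1) := by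
            apply mul_le_mul_of_nonneg_right h16 (by positivity)
        _ = e/2 * ((α⁻¹+β⁻¹) * 4^(n-1)) := by ring
    calc ∑ p ∈ Finset.Ico (P n + 1) (n+2), Bq (n+1) p * cc p α⁻¹ β⁻¹
        ≤ ∑ p ∈ Finset.Ico (P n + 1) (n+2),
            ((n:ℝ)+2) * (θ⁻¹)^(P n) * (Bq (n+1) p * (2*θ)^p) := Finset.sum_le_sum hterm
      _ = ((n:ℝ)+2) * (θ⁻¹)^(P n) * ∑ p ∈ Finset.Ico (P n + 1) (n+2), Bq (n+1) p * (2*θ)^p := by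
          rw [Finset.mul_sum]
      _ ≤ ((n:ℝ)+2) * (θ⁻¹)^(P n) * (4*B)^(n+1) := by
          apply mul_le_mul_of_nonneg_left (le_trans hFsum (hFB (n+1))) (by positivity)
      _ ≤ (e/2) * ((α⁻¹+β⁻¹) * 4^(n-1) / ((n:ℝ))^2) := hDbound
      _ ≤ (e/2) * Zt2 n α β := by
          apply mul_le_mul_of_nonneg_left hZlow (by positivity)
  linarith [hbulk, htail]

lemma MC_upper {α β : ℝ} (hα : 0 < α) (hβ : 0 < β) (h2a : 1/2 ≤ α) (h2b : 1/2 ≤ β)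
    {e : ℝ} (he : 0 < e) (he1 : e ≤ 1) :
    ∀ᶠ n in atTop, Zt2 (n+1) α β ≤ (4+e) * Zt2 n α β := by
  have ha2 : α⁻¹ ≤ 2 := by
    rw [show (2:ℝ) = (2⁻¹)⁻¹ by norm_num]
    exact inv_anti₀ (by norm_num) (by linarith)
  have hb2 : β⁻¹ ≤ 2 := by
    rw [show (2:ℝ) = (2⁻¹)⁻¹ by norm_num]
    exact inv_anti₀ (by norm_num) (by linarith)
  obtain ⟨M, hM2, hMe⟩ : ∃ M : ℕ, 2 ≤ M ∧ 18/e ≤ (M:ℝ) := by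
    refine ⟨max 2 ⌈18/e⌉₊, le_max_left _ _, ?_⟩
    calc (18/e : ℝ) ≤ ⌈18/e⌉₊ := Nat.le_ceil _
      _ ≤ ((max 2 ⌈18/e⌉₊ : ℕ) : ℝ) := by exact_mod_cast le_max_right 2 ⌈18/e⌉₊
  have hM0 : 0 < M := by omega
  obtain ⟨θ, B, hθ1, hBeq, hkey⟩ : ∃ θ B : ℝ, 1 < θ ∧ B = θ^2/(2*θ-1) ∧ B^M < θ := by
    refine ⟨1 + 1/(4*(M:ℝ)), (1 + 1/(4*(M:ℝ)))^2/(2*(1 + 1/(4*(M:ℝ)))-1), ?_, rfl, ?_⟩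
    · have hM' : (0:ℝ) < (M:ℝ) := by exact_mod_cast hM0
      have : (0:ℝ) < 1/(4*(M:ℝ)) := by positivity
      linarith
    · exact key_poly hM2
  have hθ0 : (0:ℝ) < θ := by linarith
  have h2θ : (0:ℝ) < 2*θ - 1 := by linarith
  have hB0 : (0:ℝ) < B := by rw [hBeq]; positivity
  have hB1 : 1 ≤ B := by
    rw [hBeq, le_div_iff₀ h2θ]
    nlinarith
  have hγ0 : (0:ℝ) ≤ B^M * θ⁻¹ := by positivity
  have hγ1 : B^M * θ⁻¹ < 1 := by
    rw [← div_eq_mul_inv, div_lt_one hθ0]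
    exact hkey
  have hFB : ∀ n, Fb n (2*θ) ≤ (4*B)^n := by
    intro n
    have h := Fb_le_pow (show 1 < 2*θ by linarith) n
    have heq : (2*θ)^2/(2*θ-1) = 4*B := by
      rw [hBeq]
      field_simp
      ring
    rwa [heq] at h
  have hPM : ∀ n : ℕ, n+1 ≤ M * ((n+1)/M + 1) := by
    intro n
    have h1 := Nat.div_add_mod (n+1) M
    have h2 := Nat.mod_lt (n+1) hM0
    nlinarith [Nat.div_le_self (n+1) M]
  -- D tends to zero
  have hDtend : Tendsto (fun n : ℕ => ((n:ℝ)+2)^4 * (θ⁻¹)^((n+1)/M + 1) * B^(n+1))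
      atTop (nhds 0) := by
    apply tendsto_of_pow_le (show 1 ≤ M by omega)
      (y := fun n : ℕ => ((n:ℝ)+2)^4 * (θ⁻¹)^((n+1)/M + 1) * B^(n+1))
      (g := fun n : ℕ => (((n:ℝ)+2)^(4*M)) * (B^M * θ⁻¹)^(n+1))
      (fun n => by positivity) _ (tendsto_poly_geom (4*M) hγ0 hγ1)
    intro n
    rw [mul_pow, mul_pow, ← pow_mul, ← pow_mul, ← pow_mul]
    have h1 : (θ⁻¹)^(((n+1)/M + 1) * M) ≤ (θ⁻¹)^(n+1) :=
      pow_le_pow_of_le_one (by positivity) (by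
        rw [inv_le_one_iff₀]; right; linarith) (by
          have := hPM n; nlinarith)
    have h2 : (B^M * θ⁻¹)^(n+1) = B^((n+1)*M) * (θ⁻¹)^(n+1) := by
      rw [mul_pow, ← pow_mul]
      ring_nf
    show ((n:ℝ)+2)^(4*M) * (θ⁻¹)^(((n+1)/M+1) * M) * B^((n+1)*M)
        ≤ ((n:ℝ)+2)^(4*M) * (B^M * θ⁻¹)^(n+1)
    rw [h2]
    calc ((n:ℝ)+2)^(4*M) * (θ⁻¹)^(((n+1)/M+1) * M) * B^((n+1)*M)
        ≤ ((n:ℝ)+2)^(4*M) * (θ⁻¹)^(n+1) * B^((n+1)*M) := by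
          apply mul_le_mul_of_nonneg_right _ (by positivity)
          exact mul_le_mul_of_nonneg_left h1 (by positivity)
      _ = ((n:ℝ)+2)^(4*M) * (B^((n+1)*M) * (θ⁻¹)^(n+1)) := by ring
  -- apply aux
  apply MC_upper_aux hα hβ ha2 hb2 he θ B (fun n => (n+1)/M + 1) hθ1 hB0 hFB
  · -- evP
    rw [eventually_atTop]
    refine ⟨3, fun n hn => ?_⟩
    show (n+1)/M + 1 ≤ n
    have h1 : (n+1)/M ≤ (n+1)/2 := Nat.div_le_div_left hM2 (by norm_num)
    omega
  · -- evBulk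
    rw [eventually_atTop]
    refine ⟨⌈18/e⌉₊, fun n hn => ?_⟩
    show (4:ℝ)*((n:ℝ)+1) ≤ (4+e/2)*(((n:ℝ)+1)-(((n+1)/M + 1 : ℕ) : ℝ))
    have hn18 : 18/e ≤ (n:ℝ) := le_trans (Nat.le_ceil _) (by exact_mod_cast hn)
    have h18 : 18 ≤ e*((n:ℝ)+1) := by
      rw [div_le_iff₀ he] at hn18
      nlinarith
    have hMpos : (0:ℝ) < M := by exact_mod_cast hM0
    have hP1 : (((n+1)/M + 1 : ℕ) : ℝ) ≤ ((n:ℝ)+1)/(M:ℝ) + 1 := by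
      push_cast
      have := Nat.cast_div_le (α := ℝ) (m := n+1) (n := M)
      push_cast at this
      linarith
    have hM18 : ((n:ℝ)+1)/(M:ℝ) ≤ ((n:ℝ)+1)*e/18 := by
      rw [div_le_iff₀ hMpos]
      calc ((n:ℝ)+1) = (((n:ℝ)+1)*e/18) * (18/e) := by field_simp
        _ ≤ (((n:ℝ)+1)*e/18) * M := by
            apply mul_le_mul_of_nonneg_left hMe
            positivity
    have hP2 : (((n+1)/M + 1 : ℕ) : ℝ) ≤ ((n:ℝ)+1)*e/18 + 1 := by linarith
    have hP0 : (0:ℝ) ≤ (((n+1)/M + 1 : ℕ) : ℝ) := by positivity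
    have h45 : (0:ℝ) ≤ (1-e) * (((n+1)/M + 1 : ℕ) : ℝ) := mul_nonneg (by linarith) hP0
    have h92 : (9/2:ℝ) * (((n+1)/M + 1 : ℕ) : ℝ) ≤ (9/2) * (((n:ℝ)+1)*e/18 + 1) :=
      mul_le_mul_of_nonneg_left hP2 (by norm_num)
    linarith [h18, h45, h92]
  · -- evD
    have ha0 : (0:ℝ) < α⁻¹ := by positivity
    have hb0 : (0:ℝ) < β⁻¹ := by positivity
    exact hDtend.eventually_lt_const (by positivity)

lemma MC_tendsto {α β : ℝ} (hα : 0 < α) (hβ : 0 < β) (h2a : 1/2 ≤ α) (h2b : 1/2 ≤ β) :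
    Tendsto (fun n : ℕ => Zt2 (n - 1) α β / Zt2 n α β) atTop (nhds (1/4)) := by
  rw [Metric.tendsto_atTop]
  intro ε hε
  have he : (0:ℝ) < min 1 ε := lt_min one_pos hε
  have he1 : min 1 ε ≤ 1 := min_le_left _ _
  have heε : min 1 ε ≤ ε := min_le_right _ _
  have hup := MC_upper hα hβ h2a h2b he he1
  rw [eventually_atTop] at hup
  obtain ⟨N₁, hN₁⟩ := hup
  refine ⟨max (N₁+1) (⌈3/ε⌉₊ + 2), fun n hn => ?_⟩
  have hn1 : N₁ + 1 ≤ n := le_trans (le_max_left _ _) hn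
  have hn2 : ⌈3/ε⌉₊ + 2 ≤ n := le_trans (le_max_right _ _) hn
  obtain ⟨m, rfl⟩ : ∃ m, n = m + 1 := ⟨n - 1, by omega⟩
  have hm1 : m + 1 - 1 = m := by omega
  rw [hm1]
  have hZm : (0:ℝ) < Zt2 m α β := Zt2_pos hα hβ m
  have hZm1 : (0:ℝ) < Zt2 (m+1) α β := Zt2_pos hα hβ (m+1)
  have hmR : 3/ε + 1 ≤ (m:ℝ) := by
    have h1 : (3/ε : ℝ) ≤ ⌈3/ε⌉₊ := Nat.le_ceil _
    have h2 : (⌈3/ε⌉₊ : ℝ) + 1 ≤ m := by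
      have : ⌈3/ε⌉₊ + 1 ≤ m := by omega
      exact_mod_cast this
    linarith
  have hm0 : (1:ℝ) ≤ (m:ℝ) := by
    have : (0:ℝ) < 3/ε := by positivity
    linarith
  have h4m : (0:ℝ) < 4*(m:ℝ) - 2 := by linarith
  -- upper bound on J
  have hJu : Zt2 m α β / Zt2 (m+1) α β ≤ ((m:ℝ)+1)/(4*(m:ℝ)-2) := by
    rw [div_le_div_iff₀ hZm1 h4m]
    have := Zt2_ratio_lower hα hβ m
    linarith
  -- lower bound on J
  have hJl : 1/(4 + min 1 ε) ≤ Zt2 m α β / Zt2 (m+1) α β := by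
    rw [div_le_div_iff₀ (by linarith) hZm1]
    have := hN₁ m (by omega)
    linarith
  rw [Real.dist_eq, abs_sub_lt_iff]
  constructor
  · -- J - 1/4 < ε
    have h1 : ((m:ℝ)+1)/(4*(m:ℝ)-2) - 1/4 = 3/(2*(4*(m:ℝ)-2)) := by
      have := ne_of_gt h4m
      rw [div_sub_div _ _ this (by norm_num),
        div_eq_div_iff (mul_ne_zero this (by norm_num)) (mul_ne_zero (by norm_num) this)]
      ring
    have hh : 3 + ε ≤ (m:ℝ)*ε := by
      have h := mul_le_mul_of_nonneg_right hmR hε.le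
      rw [add_mul, div_mul_cancel₀ _ (ne_of_gt hε), one_mul] at h
      linarith
    have h2 : 3/(2*(4*(m:ℝ)-2)) < ε := by
      rw [div_lt_iff₀ (by linarith)]
      nlinarith [hh]
    linarith
  · -- 1/4 - J < ε
    have h1 : 1/4 - 1/(4 + min 1 ε) = (min 1 ε)/(4*(4 + min 1 ε)) := by
      rw [div_sub_div _ _ (by norm_num) (by positivity : (4:ℝ) + min 1 ε ≠ 0)]
      rw [show (1:ℝ) * (4 + min 1 ε) - 4*1 = min 1 ε by ring]
    have h2 : (min 1 ε)/(4*(4 + min 1 ε)) ≤ (min 1 ε)/16 := by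
      apply div_le_div_of_nonneg_left he.le (by norm_num)
      nlinarith
    have h3 : (min 1 ε)/16 < ε := by
      calc (min 1 ε)/16 ≤ ε/16 := by linarith
        _ < ε := by linarith
    linarith


/-- The TASEP current Jₙ = Z̃_{n-1}/Z̃ₙ converges to 1/4, α(1-α) or β(1-β) in the
three regions of the phase diagram. -/
theorem tasep_current_limit (α β : ℝ) (hα : 0 < α) (hβ : 0 < β) :
    (1 / 2 ≤ α → 1 / 2 ≤ β →
      Tendsto (fun n : ℕ => Zt2 (n - 1) α β / Zt2 n α β) atTop (nhds (1 / 4))) ∧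
    (α < 1 / 2 → α < β →
      Tendsto (fun n : ℕ => Zt2 (n - 1) α β / Zt2 n α β) atTop (nhds (α * (1 - α)))) ∧
    (β < 1 / 2 → β < α →
      Tendsto (fun n : ℕ => Zt2 (n - 1) α β / Zt2 n α β) atTop (nhds (β * (1 - β)))) := by
  refine ⟨fun h1 h2 => MC_tendsto hα hβ h1 h2,
          fun h1 h2 => LD_tendsto hα hβ h1 h2,
          fun h1 h2 => ?_⟩
  have := LD_tendsto hβ hα h1 h2
  apply this.congr
  intro n
  rw [Zt2_symm (n-1) β α, Zt2_symm n β α]
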